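/- For a bounded right linear operator A on a quaternionic Hilbert space with associated complex operator matrix χ_A, one has χ_{A*} = (χ_A)*; consequently A is self-adjoint (resp. positive, normal, unitary, anti self-adjoint) if and only if χ_A is self-adjoint (resp. positive, normal, unitary, anti self-adjoint). -/
import Mathlib


noncomputable section

open MulOpposite

local notation "ℍ" => Quaternion ℝ

variable {H : Type*} [NormedAddCommGroup H] [Module ℍᵐᵒᵖ H]

/-- The axioms of a quaternion-valued inner product compatible with the norm on a
right quaternionic module `H` (scalars act on the right via `ℍᵐᵒᵖ`). -/
structure QInner (inn : H → H → ℍ) : Prop where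
  add_right : ∀ u v w : H, inn u (v + w) = inn u v + inn u w
  smul_right : ∀ (u v : H) (q : ℍ), inn u (op q • v) = inn u v * q
  conj_symm : ∀ u v : H, inn u v = star (inn v u)
  norm_sq : ∀ u : H, inn u u = ((‖u‖ ^ 2 : ℝ) : ℍ)

/-- `B` is the adjoint of the bounded right linear operator `A`. -/
def IsAdjB (inn : H → H → ℍ) (A B : H →L[ℍᵐᵒᵖ] H) : Prop :=
  ∀ x y : H, inn (B x) y = inn x (A y)

/-- `A` is a positive bounded operator. -/
def IsPosB (inn : H → H → ℍ) (A : H →L[ℍᵐᵒᵖ] H) : Prop :=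
  IsAdjB inn A A ∧ ∀ x : H, ∃ r : ℝ, 0 ≤ r ∧ inn x (A x) = (r : ℍ)

/-- Orthogonal complement of a set. -/
def qOrth (inn : H → H → ℍ) (S : Set H) : Set H := {x | ∀ y ∈ S, inn y x = 0}

/-- Null space of a bounded operator. -/
def kerB (A : H →L[ℍᵐᵒᵖ] H) : Set H := {x | A x = 0}

/-- `U` is a partial isometry: it is isometric on `N(U)^⊥`. -/
def IsPartialIsomB (inn : H → H → ℍ) (U : H →L[ℍᵐᵒᵖ] H) : Prop :=
  ∀ x ∈ qOrth inn (kerB U), ‖U x‖ = ‖x‖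

/-- Null space of an unbounded operator. -/
def pKer (T : H →ₗ.[ℍᵐᵒᵖ] H) : Set H := {x | ∃ hx : x ∈ T.domain, T ⟨x, hx⟩ = 0}

/-- Range of an unbounded operator. -/
def pRan (T : H →ₗ.[ℍᵐᵒᵖ] H) : Set H := Set.range fun x : T.domain => T x

/-- `S` is the adjoint of the densely defined operator `T` : the formal adjoint
identity holds and the domain of `S` is maximal. -/
def IsAdjP (inn : H → H → ℍ) (T S : H →ₗ.[ℍᵐᵒᵖ] H) : Prop :=
  (∀ (x : S.domain) (y : T.domain), inn (x : H) (T y) = inn (S x) (y : H)) ∧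
  ∀ x z : H, (∀ y : T.domain, inn x (T y) = inn z (y : H)) → x ∈ S.domain

/-- `T` is a positive (self-adjoint) unbounded operator. -/
def IsPosP (inn : H → H → ℍ) (T : H →ₗ.[ℍᵐᵒᵖ] H) : Prop :=
  IsAdjP inn T T ∧ ∀ x : T.domain, ∃ r : ℝ, 0 ≤ r ∧ inn (x : H) (T x) = (r : ℍ)

/-- `C = S ∘ T` as unbounded operators, with the usual maximal domain. -/
def IsCompP (S T C : H →ₗ.[ℍᵐᵒᵖ] H) : Prop :=
  (∀ x : H, x ∈ C.domain ↔ ∃ hx : x ∈ T.domain, T ⟨x, hx⟩ ∈ S.domain) ∧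
  ∀ (x : C.domain) (hx : (x : H) ∈ T.domain) (h2 : T ⟨x, hx⟩ ∈ S.domain),
    C x = S ⟨T ⟨x, hx⟩, h2⟩

/-- `T = U ∘ P` where `U` is bounded and `T`, `P` are unbounded. -/
def EqCompB (T : H →ₗ.[ℍᵐᵒᵖ] H) (U : H →L[ℍᵐᵒᵖ] H) (P : H →ₗ.[ℍᵐᵒᵖ] H) : Prop :=
  T.domain = P.domain ∧
  ∀ (x : H) (hx : x ∈ T.domain) (hx' : x ∈ P.domain), T ⟨x, hx⟩ = U (P ⟨x, hx'⟩)

/-- The bounded operator `B` commutes with the unbounded operator `T`, i.e. `TB ⊆ BT`. -/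
def CommP (B : H →L[ℍᵐᵒᵖ] H) (T : H →ₗ.[ℍᵐᵒᵖ] H) : Prop :=
  ∀ x : T.domain, ∃ h : B (x : H) ∈ T.domain, T ⟨B (x : H), h⟩ = B (T x)


/-- The slice Hilbert space `H₊^{Jm} = {x ∈ H : Jx = x·m}`. -/
def Hplus (J : H →L[ℍᵐᵒᵖ] H) (m : ℍ) : Set H := {x | J x = op m • x}

/-- Pairs with both components in the slice `H₊^{Jm}` (the space `H₊ ⊕ H₊`). -/
def Hplus2 (J : H →L[ℍᵐᵒᵖ] H) (m : ℍ) : Set (H × H) :=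
  {p | p.1 ∈ Hplus J m ∧ p.2 ∈ Hplus J m}

/-- The `ℂ_m`-valued inner product on `H₊ ⊕ H₊`. -/
def innP (inn : H → H → ℍ) (p q : H × H) : ℍ := inn p.1 q.1 + inn p.2 q.2

/-- The Hilbert space norm on `H₊ ⊕ H₊`. -/
def normP (p : H × H) : ℝ := Real.sqrt (‖p.1‖ ^ 2 + ‖p.2‖ ^ 2)

/-- `cj` is a conjugation of the slice `H₊^{Jm}` (e.g. the one induced by an
orthonormal basis of `H₊^{Jm}`): an additive, `ℂ_m`-antilinear, isometric involution. -/
structure IsSliceConj (inn : H → H → ℍ) (J : H →L[ℍᵐᵒᵖ] H) (m : ℍ) (cj : H → H) : Prop where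
  mem : ∀ x ∈ Hplus J m, cj x ∈ Hplus J m
  add : ∀ x y : H, cj (x + y) = cj x + cj y
  invol : ∀ x : H, cj (cj x) = x
  antilinear : ∀ x : H, cj (op m • x) = -(op m • cj x)
  inner : ∀ x ∈ Hplus J m, ∀ y ∈ Hplus J m, inn (cj x) (cj y) = inn y x

/-- `A = A₁ + A₂ · n` : the bounded right linear operator `A` decomposes along the slice
`H₊^{Jm}` into the pair of bounded `ℂ_m`-linear operators `A₁, A₂` on `H₊^{Jm}`. -/
structure IsSliceDecomp (inn : H → H → ℍ) (J : H →L[ℍᵐᵒᵖ] H) (m n : ℍ) (cj : H → H)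
    (A : H →L[ℍᵐᵒᵖ] H) (A₁ A₂ : H → H) : Prop where
  mem₁ : ∀ x ∈ Hplus J m, A₁ x ∈ Hplus J m
  mem₂ : ∀ x ∈ Hplus J m, A₂ x ∈ Hplus J m
  add₁ : ∀ x y : H, A₁ (x + y) = A₁ x + A₁ y
  add₂ : ∀ x y : H, A₂ (x + y) = A₂ x + A₂ y
  lin₁ : ∀ x : H, A₁ (op m • x) = op m • A₁ x
  lin₂ : ∀ x : H, A₂ (op m • x) = op m • A₂ x
  decomp : ∀ x ∈ Hplus J m, A x = A₁ x + op n • A₂ (cj x)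

/-- The operator matrix `χ_A = [[A₁, A₂], [-conj(A₂), conj(A₁)]]` acting on `H₊ ⊕ H₊`,
where `conj(B) = cj ∘ B ∘ cj`. -/
def chi (cj A₁ A₂ : H → H) (p : H × H) : H × H :=
  (A₁ p.1 + A₂ p.2, -(cj (A₂ (cj p.1))) + cj (A₁ (cj p.2)))

/-- The standing assumptions of the slice decomposition: `J` is anti self-adjoint and
unitary, `m, n` are anticommuting imaginary units, and `H = H₊ ⊕ H₊·n`. -/
structure SliceSetup (inn : H → H → ℍ) (J : H →L[ℍᵐᵒᵖ] H) (m n : ℍ) : Prop where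
  Jadj : IsAdjB inn J (-J)
  Junit : J.comp J = -1
  m_im : m.re = 0
  m_norm : ‖m‖ = 1
  n_im : n.re = 0
  n_norm : ‖n‖ = 1
  anticomm : m * n = -(n * m)
  split : ∀ x : H, ∃ x₁ ∈ Hplus J m, ∃ x₂ ∈ Hplus J m, x = x₁ + op n • x₂
  split_unique : ∀ x₁ ∈ Hplus J m, ∀ x₂ ∈ Hplus J m,
    x₁ + op n • x₂ = 0 → x₁ = 0 ∧ x₂ = 0


/-! ### Auxiliary lemmas -/

section Aux
set_option linter.unusedSectionVars false
set_option linter.unusedVariables false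

lemma q_re_mul_comm (a b : ℍ) : (a*b).re = (b*a).re := by
  simp only [Quaternion.re_mul]; ring

lemma q_star_of_im (m : ℍ) (h0 : m.re = 0) : star m = -m := by
  have h := Quaternion.self_add_star' m
  rw [h0] at h
  simp only [mul_zero, Quaternion.coe_zero] at h
  have := eq_neg_of_add_eq_zero_right h
  simpa using this

lemma q_unit_sq (m : ℍ) (h0 : m.re = 0) (h1 : ‖m‖ = 1) : m * m = -1 := by
  have h2 : star m * m = ((Quaternion.normSq m : ℝ) : ℍ) := Quaternion.star_mul_self m
  rw [q_star_of_im m h0] at h2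
  have h3 : Quaternion.normSq m = 1 := by
    rw [Quaternion.normSq_eq_norm_mul_self, h1]; norm_num
  rw [h3] at h2
  simp only [neg_mul] at h2
  have := congrArg Neg.neg h2
  simpa using this

lemma q_sep {m n a b : ℍ} (hm : m*m = -1) (hn : n*n = -1) (hmn : m*n = -(n*m))
    (ha : a*m = m*a) (hb : b*m = m*b) (h : a + b*n = 0) : a = 0 ∧ b = 0 := by
  have hb0 : b = 0 := by
    have e1 : a = -(b*n) := eq_neg_of_add_eq_zero_left h
    have ha' : -(b*n)*m = m*(-(b*n)) := by rw [← e1]; exact ha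
    have e2 : b*(n*m) = b*(m*n) := by
      calc b*(n*m) = -(-(b*n)*m) := by noncomm_ring
        _ = -(m*(-(b*n))) := by rw [ha']
        _ = (m*b)*n := by noncomm_ring
        _ = (b*m)*n := by rw [hb]
        _ = b*(m*n) := by noncomm_ring
    have e3 : b*(n*m) = 0 := by
      rw [hmn] at e2
      have h4 : (2:ℍ)*(b*(n*m)) = 0 := by
        have := sub_eq_zero.mpr e2
        calc (2:ℍ)*(b*(n*m)) = b*(n*m) - b*(-(n*m)) := by noncomm_ring
          _ = 0 := this
      have h2 : (2:ℍ) ≠ 0 := by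
        intro hh
        have h2' : ((2:ℝ):ℍ) = ((0:ℝ):ℍ) := by push_cast; exact hh
        exact (two_ne_zero : (2:ℝ) ≠ 0) (Quaternion.coe_injective h2')
      exact (mul_eq_zero.mp h4).resolve_left h2
    have e4 : b * n = 0 := by
      have h5 := congrArg (· * m) e3
      simp only [mul_assoc, hm, zero_mul] at h5
      simpa using h5
    have h6 := congrArg (· * n) e4
    simp only [mul_assoc, hn, zero_mul] at h6
    simpa using h6
  refine ⟨?_, hb0⟩
  rw [hb0] at h; simpa using h

lemma q_swap {m n c : ℍ} (hm : m*m = -1) (hmn : m*n = -(n*m)) (hn0 : n.re = 0)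
    (hc : c*m = m*c) : n*c = star c * n := by
  have h1 : m*(c*m) = -c := by
    rw [← mul_assoc, ← hc, mul_assoc, hm]; simp
  have e1 : n*c = m*((n*c)*m) := by
    have : m*((n*c)*m) = n*c := by
      calc m*((n*c)*m) = (m*n)*(c*m) := by noncomm_ring
        _ = -(n*m)*(c*m) := by rw [hmn]
        _ = -(n*(m*(c*m))) := by noncomm_ring
        _ = -(n*(-c)) := by rw [h1]
        _ = n*c := by noncomm_ring
    exact this.symm
  have e2 : (n*c).re = -((n*c).re) := by
    conv_lhs => rw [e1]
    rw [q_re_mul_comm m ((n*c)*m), mul_assoc, hm]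
    simp
  have hre : (n*c).re = 0 := by linarith
  have e3 := Quaternion.self_add_star' (n*c)
  rw [hre] at e3
  simp only [mul_zero, Quaternion.coe_zero] at e3
  have e4 : star (n*c) = star c * (-n) := by rw [star_mul, q_star_of_im n hn0]
  rw [e4] at e3
  have := eq_neg_of_add_eq_zero_left e3
  simpa using this

variable {f : H → H}

lemma af_zero (hf : ∀ x y : H, f (x+y) = f x + f y) : f 0 = 0 := by
  have h : f 0 = f 0 + f 0 := by
    conv_lhs => rw [show (0:H) = 0 + 0 by simp, hf]
  exact (left_eq_add.mp h)

lemma af_neg (hf : ∀ x y : H, f (x+y) = f x + f y) (x : H) : f (-x) = -(f x) := by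
  have h : f x + f (-x) = 0 := by
    rw [← hf]; simp [af_zero hf]
  exact eq_neg_of_add_eq_zero_right h

variable {inn : H → H → ℍ}

lemma inn_zero_right (hinn : QInner inn) (u : H) : inn u 0 = 0 := by
  have h : inn u 0 = inn u 0 + inn u 0 := by
    conv_lhs => rw [show (0:H) = 0 + 0 by simp, hinn.add_right]
  exact (left_eq_add.mp h)

lemma inn_zero_left (hinn : QInner inn) (u : H) : inn 0 u = 0 := by
  rw [hinn.conj_symm, inn_zero_right hinn]; simp

lemma inn_add_left (hinn : QInner inn) (u v w : H) :
    inn (u + v) w = inn u w + inn v w := by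
  rw [hinn.conj_symm (u+v) w, hinn.add_right, star_add,
    ← hinn.conj_symm, ← hinn.conj_symm]

lemma inn_neg_right (hinn : QInner inn) (u v : H) : inn u (-v) = -(inn u v) := by
  have h : inn u v + inn u (-v) = 0 := by
    rw [← hinn.add_right]; simp [inn_zero_right hinn]
  exact eq_neg_of_add_eq_zero_right h

lemma inn_neg_left (hinn : QInner inn) (u v : H) : inn (-u) v = -(inn u v) := by
  rw [hinn.conj_symm (-u) v, inn_neg_right hinn, star_neg, ← hinn.conj_symm]

lemma inn_smul_left (hinn : QInner inn) (u v : H) (q : ℍ) :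
    inn (op q • u) v = star q * inn u v := by
  rw [hinn.conj_symm (op q • u) v, hinn.smul_right, star_mul, ← hinn.conj_symm]

lemma inn_sub_left (hinn : QInner inn) (u v w : H) :
    inn (u - v) w = inn u w - inn v w := by
  rw [sub_eq_add_neg, inn_add_left hinn, inn_neg_left hinn, sub_eq_add_neg]

lemma inn_sub_right (hinn : QInner inn) (u v w : H) :
    inn u (v - w) = inn u v - inn u w := by
  rw [sub_eq_add_neg, hinn.add_right, inn_neg_right hinn, sub_eq_add_neg]

variable {J : H →L[ℍᵐᵒᵖ] H} {m n : ℍ}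

lemma hp_zero : (0:H) ∈ Hplus J m := by
  simp [Hplus]

lemma hp_add {x y : H} (hx : x ∈ Hplus J m) (hy : y ∈ Hplus J m) :
    x + y ∈ Hplus J m := by
  simp only [Hplus, Set.mem_setOf_eq] at *
  rw [map_add, hx, hy, smul_add]

lemma hp_neg {x : H} (hx : x ∈ Hplus J m) : -x ∈ Hplus J m := by
  simp only [Hplus, Set.mem_setOf_eq] at *
  rw [map_neg, hx, smul_neg]

lemma hp_sub {x y : H} (hx : x ∈ Hplus J m) (hy : y ∈ Hplus J m) :
    x - y ∈ Hplus J m := by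
  rw [sub_eq_add_neg]; exact hp_add hx (hp_neg hy)

/-- values of the inner product on the slice commute with `m`. -/
lemma inn_comm_m (hinn : QInner inn) (hslice : SliceSetup inn J m n)
    {x y : H} (hx : x ∈ Hplus J m) (hy : y ∈ Hplus J m) :
    inn x y * m = m * inn x y := by
  have h := hslice.Jadj x y
  have hJx : J x = op m • x := hx
  have hJy : J y = op m • y := hy
  rw [ContinuousLinearMap.neg_apply, hJx, hJy, inn_neg_left hinn,
    inn_smul_left hinn, hinn.smul_right, q_star_of_im m hslice.m_im] at h
  simp only [neg_mul, neg_neg] at h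
  exact h.symm

lemma smul_n_smul_n (hslice : SliceSetup inn J m n) (u : H) :
    op n • (op n • u) = -u := by
  rw [smul_smul, ← op_mul, q_unit_sq n hslice.n_im hslice.n_norm]
  simp only [op_neg, op_one, neg_smul, one_smul]

/-- expansion of the inner product along the splitting, raw form. -/
lemma pair0 (hinn : QInner inn) (a b u v : H) :
    inn (a + op n • b) (u + op n • v)
      = (inn a u + star n * inn b u) + (inn a v + star n * inn b v) * n := by
  rw [hinn.add_right, hinn.smul_right, inn_add_left hinn, inn_add_left hinn,
    inn_smul_left hinn, inn_smul_left hinn]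

/-- expansion of the inner product along the splitting, for slice elements. -/
lemma pair (hinn : QInner inn) (hslice : SliceSetup inn J m n)
    {a b u v : H} (ha : a ∈ Hplus J m) (hb : b ∈ Hplus J m)
    (hu : u ∈ Hplus J m) (hv : v ∈ Hplus J m) :
    inn (a + op n • b) (u + op n • v)
      = (inn a u + star (inn b v)) + (inn a v - star (inn b u)) * n := by
  have hm2 := q_unit_sq m hslice.m_im hslice.m_norm
  have hn2 := q_unit_sq n hslice.n_im hslice.n_norm
  have hsn : star n = -n := q_star_of_im n hslice.n_im
  have h1 : star n * inn b u = -(star (inn b u) * n) := by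
    rw [hsn, neg_mul, ← q_swap hm2 hslice.anticomm hslice.n_im
      (inn_comm_m hinn hslice hb hu)]
  have h2 : star n * inn b v = -(star (inn b v) * n) := by
    rw [hsn, neg_mul, ← q_swap hm2 hslice.anticomm hslice.n_im
      (inn_comm_m hinn hslice hb hv)]
  rw [pair0 hinn, h1, h2]
  have : (inn a v + -(star (inn b v) * n)) * n
      = inn a v * n + star (inn b v) := by
    rw [add_mul, neg_mul, mul_assoc, hn2]
    noncomm_ring
  rw [this]
  noncomm_ring

end Aux

section Aux2
set_option linter.unusedSectionVars false
set_option linter.unusedVariables false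

variable {inn : H → H → ℍ} {J : H →L[ℍᵐᵒᵖ] H} {m n : ℍ} {cj : H → H}

lemma cm_star {m a : ℍ} (hm0 : m.re = 0) (ha : a*m = m*a) :
    star a * m = m * star a := by
  have h := congrArg star ha
  rw [star_mul, star_mul, q_star_of_im m hm0] at h
  simp only [neg_mul, mul_neg] at h
  have := congrArg Neg.neg h
  simpa using this.symm

lemma vuniq (hslice : SliceSetup inn J m n) {u₁ u₂ v₁ v₂ : H}
    (hu₁ : u₁ ∈ Hplus J m) (hu₂ : u₂ ∈ Hplus J m)
    (hv₁ : v₁ ∈ Hplus J m) (hv₂ : v₂ ∈ Hplus J m)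
    (h : u₁ + op n • u₂ = v₁ + op n • v₂) : u₁ = v₁ ∧ u₂ = v₂ := by
  have h0 : (u₁ + op n • u₂) - (v₁ + op n • v₂) = 0 := sub_eq_zero.mpr h
  have h1 : (u₁ - v₁) + op n • (u₂ - v₂) = 0 := by
    rw [smul_sub, ← h0]; abel
  obtain ⟨e1, e2⟩ := hslice.split_unique _ (hp_sub hu₁ hv₁) _ (hp_sub hu₂ hv₂) h1
  exact ⟨sub_eq_zero.mp e1, sub_eq_zero.mp e2⟩

lemma app_decomp {A : H →L[ℍᵐᵒᵖ] H} {A₁ A₂ : H → H}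
    (hslice : SliceSetup inn J m n)
    (hdec : IsSliceDecomp inn J m n cj A A₁ A₂)
    {x₁ x₂ : H} (h1 : x₁ ∈ Hplus J m) (h2 : x₂ ∈ Hplus J m) :
    A (x₁ + op n • x₂) = (A₁ x₁ - A₂ (cj x₂)) + op n • (A₂ (cj x₁) + A₁ x₂) := by
  rw [map_add, map_smul, hdec.decomp x₁ h1, hdec.decomp x₂ h2, smul_add,
    smul_add, smul_n_smul_n hslice]
  abel

lemma adj_comp (hinn : QInner inn) (hslice : SliceSetup inn J m n)
    (hcj : IsSliceConj inn J m cj)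
    {A As : H →L[ℍᵐᵒᵖ] H} {A₁ A₂ As₁ As₂ : H → H}
    (hadj : IsAdjB inn A As)
    (hdecA : IsSliceDecomp inn J m n cj A A₁ A₂)
    (hdecAs : IsSliceDecomp inn J m n cj As As₁ As₂)
    {x y : H} (hx : x ∈ Hplus J m) (hy : y ∈ Hplus J m) :
    inn (As₁ x) y = inn x (A₁ y) ∧ inn x (A₂ (cj y)) = -(inn y (As₂ (cj x))) := by
  have hm2 := q_unit_sq m hslice.m_im hslice.m_norm
  have hn2 := q_unit_sq n hslice.n_im hslice.n_norm
  have h := hadj x y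
  rw [hdecAs.decomp x hx, hdecA.decomp y hy] at h
  have hL : inn (As₁ x + op n • As₂ (cj x)) y
      = inn (As₁ x) y + (-(star (inn (As₂ (cj x)) y))) * n := by
    have hp := pair hinn hslice (hdecAs.mem₁ x hx) (hdecAs.mem₂ _ (hcj.mem x hx))
      hy (hp_zero (J := J) (m := m))
    rw [smul_zero, add_zero] at hp
    rw [hp]
    simp only [inn_zero_right hinn, star_zero, add_zero, zero_sub, neg_mul]
  have hR : inn x (A₁ y + op n • A₂ (cj y))
      = inn x (A₁ y) + inn x (A₂ (cj y)) * n := by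
    have hp := pair hinn hslice hx (hp_zero (J := J) (m := m))
      (hdecA.mem₁ y hy) (hdecA.mem₂ _ (hcj.mem y hy))
    rw [smul_zero, add_zero] at hp
    rw [hp]
    simp only [inn_zero_left hinn, star_zero, add_zero, sub_zero]
  rw [hL] at h
  -- h : inn (As₁ x) y + (-(star c)) * n = inn x (A₁ y + op n • A₂ (cj y))
  rw [hR] at h
  set a := inn (As₁ x) y - inn x (A₁ y) with hadef
  set b := -(star (inn (As₂ (cj x)) y)) - inn x (A₂ (cj y)) with hbdef
  have h0 : a + b * n = 0 := by
    rw [hadef, hbdef]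
    have : inn (As₁ x) y - inn x (A₁ y) +
        (-(star (inn (As₂ (cj x)) y)) - inn x (A₂ (cj y))) * n
        = (inn (As₁ x) y + (-(star (inn (As₂ (cj x)) y))) * n)
          - (inn x (A₁ y) + inn x (A₂ (cj y)) * n) := by noncomm_ring
    rw [this, h, sub_self]
  have ca : a * m = m * a := by
    rw [hadef, sub_mul, mul_sub,
      inn_comm_m hinn hslice (hdecAs.mem₁ x hx) hy,
      inn_comm_m hinn hslice hx (hdecA.mem₁ y hy)]
  have cb : b * m = m * b := by
    rw [hbdef, sub_mul, mul_sub, neg_mul, mul_neg,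
      cm_star hslice.m_im (inn_comm_m hinn hslice (hdecAs.mem₂ _ (hcj.mem x hx)) hy),
      inn_comm_m hinn hslice hx (hdecA.mem₂ _ (hcj.mem y hy))]
  obtain ⟨ea, eb⟩ := q_sep hm2 hn2 hslice.anticomm ca cb h0
  constructor
  · exact sub_eq_zero.mp ea
  · have e1 : inn x (A₂ (cj y)) = -(star (inn (As₂ (cj x)) y)) := by
      rw [hbdef] at eb
      have := sub_eq_zero.mp eb
      exact this.symm
    rw [e1, ← hinn.conj_symm]

end Aux2

section Aux3
set_option linter.unusedSectionVars false
set_option linter.unusedVariables false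

variable {inn : H → H → ℍ} {J : H →L[ℍᵐᵒᵖ] H} {m n : ℍ} {cj : H → H}

lemma chi_adj (hinn : QInner inn) (hslice : SliceSetup inn J m n)
    (hcj : IsSliceConj inn J m cj)
    {A As : H →L[ℍᵐᵒᵖ] H} {A₁ A₂ As₁ As₂ : H → H}
    (hadj : IsAdjB inn A As)
    (hdecA : IsSliceDecomp inn J m n cj A A₁ A₂)
    (hdecAs : IsSliceDecomp inn J m n cj As As₁ As₂) :
    ∀ p ∈ Hplus2 J m, ∀ q ∈ Hplus2 J m,
      innP inn (chi cj As₁ As₂ p) q = innP inn p (chi cj A₁ A₂ q) := by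
  rintro ⟨p₁, p₂⟩ ⟨hp₁, hp₂⟩ ⟨q₁, q₂⟩ ⟨hq₁, hq₂⟩
  have hcp₂ : cj p₂ ∈ Hplus J m := hcj.mem _ hp₂
  have hcq₂ : cj q₂ ∈ Hplus J m := hcj.mem _ hq₂
  have hcq₁ : cj q₁ ∈ Hplus J m := hcj.mem _ hq₁
  have hcp₁ : cj p₁ ∈ Hplus J m := hcj.mem _ hp₁
  have t1 : inn (As₁ p₁) q₁ = inn p₁ (A₁ q₁) :=
    (adj_comp hinn hslice hcj hadj hdecA hdecAs hp₁ hq₁).1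
  have t2 : inn (As₂ p₂) q₁ = -(inn p₂ (cj (A₂ (cj q₁)))) := by
    have e1 : inn p₂ (cj (A₂ (cj q₁))) = inn (A₂ (cj q₁)) (cj p₂) := by
      conv_lhs => rw [← hcj.invol p₂]
      exact hcj.inner _ hcp₂ _ (hdecA.mem₂ _ hcq₁)
    have e2 : inn (cj p₂) (A₂ (cj q₁)) = -(inn q₁ (As₂ (cj (cj p₂)))) :=
      (adj_comp hinn hslice hcj hadj hdecA hdecAs hcp₂ hq₁).2
    rw [hcj.invol] at e2
    have e3 : inn (A₂ (cj q₁)) (cj p₂) = star (inn (cj p₂) (A₂ (cj q₁))) :=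
      hinn.conj_symm _ _
    rw [e2, star_neg, ← hinn.conj_symm] at e3
    rw [e1, e3, neg_neg]
  have t3 : inn (cj (As₂ (cj p₁))) q₂ = -(inn p₁ (A₂ q₂)) := by
    have e1 : inn (cj (As₂ (cj p₁))) q₂ = inn (cj q₂) (As₂ (cj p₁)) := by
      conv_lhs => rw [← hcj.invol q₂]
      exact hcj.inner _ (hdecAs.mem₂ _ hcp₁) _ hcq₂
    have e2 : inn p₁ (A₂ (cj (cj q₂))) = -(inn (cj q₂) (As₂ (cj p₁))) :=
      (adj_comp hinn hslice hcj hadj hdecA hdecAs hp₁ hcq₂).2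
    rw [hcj.invol] at e2
    rw [e1, e2, neg_neg]
  have t4 : inn (cj (As₁ (cj p₂))) q₂ = inn p₂ (cj (A₁ (cj q₂))) := by
    have e1 : inn (cj (As₁ (cj p₂))) q₂ = inn (cj q₂) (As₁ (cj p₂)) := by
      conv_lhs => rw [← hcj.invol q₂]
      exact hcj.inner _ (hdecAs.mem₁ _ hcp₂) _ hcq₂
    have e2 : inn (cj q₂) (As₁ (cj p₂)) = star (inn (As₁ (cj p₂)) (cj q₂)) :=
      hinn.conj_symm _ _
    have e3 : inn (As₁ (cj p₂)) (cj q₂) = inn (cj p₂) (A₁ (cj q₂)) :=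
      (adj_comp hinn hslice hcj hadj hdecA hdecAs hcp₂ hcq₂).1
    have e4 : star (inn (cj p₂) (A₁ (cj q₂))) = inn (A₁ (cj q₂)) (cj p₂) :=
      (hinn.conj_symm _ _).symm
    have e5 : inn (A₁ (cj q₂)) (cj p₂) = inn p₂ (cj (A₁ (cj q₂))) := by
      conv_lhs => rw [← hcj.invol (A₁ (cj q₂))]
      exact hcj.inner _ (hcj.mem _ (hdecA.mem₁ _ hcq₂)) _ hp₂
    rw [e1, e2, e3, e4, e5]
  simp only [innP, chi]
  rw [inn_add_left hinn, inn_add_left hinn, inn_neg_left hinn,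
    hinn.add_right, hinn.add_right, inn_neg_right hinn,
    t1, t2, t3, t4]
  abel

lemma op_restrict (hslice : SliceSetup inn J m n) {C D : H →L[ℍᵐᵒᵖ] H}
    (h : ∀ x ∈ Hplus J m, C x = D x) (x : H) : C x = D x := by
  obtain ⟨x₁, h1, x₂, h2, rfl⟩ := hslice.split x
  rw [map_add, map_add, map_smul, map_smul, h x₁ h1, h x₂ h2]

lemma restrict (hinn : QInner inn) (hslice : SliceSetup inn J m n)
    {C D : H →L[ℍᵐᵒᵖ] H} (s : ℝ)
    (h : ∀ x ∈ Hplus J m, ∀ y ∈ Hplus J m, inn (C x) y = (s:ℍ) * inn x (D y))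
    (x y : H) : inn (C x) y = (s:ℍ) * inn x (D y) := by
  obtain ⟨x₁, hx1, x₂, hx2, rfl⟩ := hslice.split x
  obtain ⟨y₁, hy1, y₂, hy2, rfl⟩ := hslice.split y
  rw [map_add, map_smul, map_add, map_smul, pair0 hinn, pair0 hinn,
    h x₁ hx1 y₁ hy1, h x₁ hx1 y₂ hy2, h x₂ hx2 y₁ hy1, h x₂ hx2 y₂ hy2]
  simp only [Quaternion.coe_mul_eq_smul, smul_add, mul_smul_comm,
    smul_mul_assoc, add_mul, mul_assoc, add_assoc]

lemma comp_decomp (hslice : SliceSetup inn J m n) (hcj : IsSliceConj inn J m cj)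
    {A B : H →L[ℍᵐᵒᵖ] H} {A₁ A₂ B₁ B₂ : H → H}
    (hdecA : IsSliceDecomp inn J m n cj A A₁ A₂)
    (hdecB : IsSliceDecomp inn J m n cj B B₁ B₂)
    {x : H} (hx : x ∈ Hplus J m) :
    A (B x) = (A₁ (B₁ x) - A₂ (cj (B₂ (cj x))))
      + op n • (A₂ (cj (B₁ x)) + A₁ (B₂ (cj x))) := by
  rw [hdecB.decomp x hx]
  exact app_decomp hslice hdecA (hdecB.mem₁ x hx) (hdecB.mem₂ _ (hcj.mem x hx))

end Aux3

section Aux4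
set_option linter.unusedSectionVars false
set_option linter.unusedVariables false

variable {inn : H → H → ℍ} {J : H →L[ℍᵐᵒᵖ] H} {m n : ℍ} {cj : H → H}

lemma cm_add {m a b : ℍ} (ha : a*m = m*a) (hb : b*m = m*b) :
    (a+b)*m = m*(a+b) := by rw [add_mul, mul_add, ha, hb]

lemma cm_sub {m a b : ℍ} (ha : a*m = m*a) (hb : b*m = m*b) :
    (a-b)*m = m*(a-b) := by rw [sub_mul, mul_sub, ha, hb]

lemma cm_neg {m a : ℍ} (ha : a*m = m*a) : (-a)*m = m*(-a) := by
  rw [neg_mul, mul_neg, ha]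

lemma quad (hinn : QInner inn) (hslice : SliceSetup inn J m n)
    (hcj : IsSliceConj inn J m cj)
    {A : H →L[ℍᵐᵒᵖ] H} {A₁ A₂ : H → H}
    (hdecA : IsSliceDecomp inn J m n cj A A₁ A₂)
    (hAA : ∀ x y : H, inn (A x) y = inn x (A y))
    {p₁ p₂ : H} (hp₁ : p₁ ∈ Hplus J m) (hp₂ : p₂ ∈ Hplus J m) :
    inn (p₁ + op n • (-(cj p₂))) (A (p₁ + op n • (-(cj p₂))))
      = innP inn (p₁, p₂) (chi cj A₁ A₂ (p₁, p₂)) := by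
  have hm2 := q_unit_sq m hslice.m_im hslice.m_norm
  have hn2 := q_unit_sq n hslice.n_im hslice.n_norm
  have hcp₂ : cj p₂ ∈ Hplus J m := hcj.mem _ hp₂
  have hcp₁ : cj p₁ ∈ Hplus J m := hcj.mem _ hp₁
  have hx₂ : -(cj p₂) ∈ Hplus J m := hp_neg hcp₂
  have hcjneg : ∀ z : H, cj (-z) = -(cj z) := af_neg hcj.add
  have hA₂neg : ∀ z : H, A₂ (-z) = -(A₂ z) := af_neg hdecA.add₂
  have hA₁neg : ∀ z : H, A₁ (-z) = -(A₁ z) := af_neg hdecA.add₁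
  have hAx : A (p₁ + op n • (-(cj p₂)))
      = (A₁ p₁ + A₂ p₂) + op n • (A₂ (cj p₁) + -(A₁ (cj p₂))) := by
    have h := app_decomp hslice hdecA hp₁ hx₂
    rw [hcjneg, hcj.invol, hA₂neg, hA₁neg, sub_neg_eq_add] at h
    exact h
  have hu : A₁ p₁ + A₂ p₂ ∈ Hplus J m :=
    hp_add (hdecA.mem₁ _ hp₁) (hdecA.mem₂ _ hp₂)
  have hv : A₂ (cj p₁) + -(A₁ (cj p₂)) ∈ Hplus J m :=
    hp_add (hdecA.mem₂ _ hcp₁) (hp_neg (hdecA.mem₁ _ hcp₂))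
  have hpair := pair hinn hslice hp₁ hx₂ hu hv
  set u := A₁ p₁ + A₂ p₂ with hudef
  set v := A₂ (cj p₁) + -(A₁ (cj p₂)) with hvdef
  set x := p₁ + op n • (-(cj p₂)) with hxdef
  set C := inn p₁ u + star (inn (-(cj p₂)) v) with hCdef
  set D := inn p₁ v - star (inn (-(cj p₂)) u) with hDdef
  have hs : inn x (A x) = C + D * n := by rw [hAx]; exact hpair
  have hst : star (inn x (A x)) = inn x (A x) := by
    rw [← hinn.conj_symm (A x) x]
    exact hAA x x
  -- commuting facts
  have c1 : inn p₁ u * m = m * inn p₁ u := inn_comm_m hinn hslice hp₁ hu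
  have c2 : inn (-(cj p₂)) v * m = m * (inn (-(cj p₂)) v) :=
    inn_comm_m hinn hslice hx₂ hv
  have c3 : inn p₁ v * m = m * inn p₁ v := inn_comm_m hinn hslice hp₁ hv
  have c4 : inn (-(cj p₂)) u * m = m * (inn (-(cj p₂)) u) :=
    inn_comm_m hinn hslice hx₂ hu
  have cC : C * m = m * C := cm_add c1 (cm_star hslice.m_im c2)
  have cD : D * m = m * D := cm_sub c3 (cm_star hslice.m_im c4)
  have hD0 : D = 0 := by
    have e1 : star (C + D * n) = C + D * n := by rw [← hs]; exact hst
    have e2 : star (D * n) = -(D * n) := by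
      rw [star_mul, q_star_of_im n hslice.n_im, neg_mul,
        q_swap hm2 hslice.anticomm hslice.n_im (cm_star hslice.m_im cD), star_star]
    rw [star_add, e2] at e1
    have e3 : (star C - C) + (-(2*D)) * n = 0 := by
      have : (star C - C) + (-(2*D)) * n = (star C + -(D*n)) - (C + D*n) := by
        noncomm_ring
      rw [this, e1, sub_self]
    have cD2 : (-(2*D)) * m = m * (-(2*D)) := by
      have h2m : (2:ℍ) * m = m * 2 := by
        have := Quaternion.coe_commutes (2:ℝ) m
        push_cast at this
        exact this
      have : (2*D) * m = m * (2*D) := by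
        rw [mul_assoc, cD, ← mul_assoc, h2m, mul_assoc]
      exact cm_neg this
    obtain ⟨_, e4⟩ := q_sep hm2 hn2 hslice.anticomm
      (cm_sub (cm_star hslice.m_im cC) cC) cD2 e3
    have : (2:ℍ) * D = 0 := by
      have := congrArg Neg.neg e4
      simpa using this
    have h2 : (2:ℍ) ≠ 0 := by
      intro hh
      have h2' : ((2:ℝ):ℍ) = ((0:ℝ):ℍ) := by push_cast; exact hh
      exact (two_ne_zero : (2:ℝ) ≠ 0) (Quaternion.coe_injective h2')
    exact (mul_eq_zero.mp this).resolve_left h2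
  rw [hs, hD0, zero_mul, add_zero]
  -- now show C = innP ...
  have einner : ∀ Z : H, Z ∈ Hplus J m → inn p₂ (cj Z) = inn Z (cj p₂) := by
    intro Z hZ
    conv_lhs => rw [← hcj.invol p₂]
    exact hcj.inner _ hcp₂ _ hZ
  rw [hCdef, hudef, hvdef]
  simp only [innP, chi]
  rw [inn_neg_left hinn, star_neg, ← hinn.conj_symm,
    inn_add_left hinn, inn_neg_left hinn,
    hinn.add_right p₂ (-(cj (A₂ (cj p₁)))) (cj (A₁ (cj p₂))),
    inn_neg_right hinn,
    einner _ (hdecA.mem₂ _ hcp₁), einner _ (hdecA.mem₁ _ hcp₂)]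
  abel

end Aux4

section Aux5
set_option linter.unusedSectionVars false
set_option linter.unusedVariables false

variable {inn : H → H → ℍ} {J : H →L[ℍᵐᵒᵖ] H} {m n : ℍ} {cj : H → H}

lemma af_sub {f : H → H} (hf : ∀ x y : H, f (x+y) = f x + f y) (x y : H) :
    f (x - y) = f x - f y := by
  rw [sub_eq_add_neg, hf, af_neg hf, sub_eq_add_neg]

/-- componentwise description of `A ∘ As = As ∘ A`. -/
lemma comp_comm_iff (hslice : SliceSetup inn J m n) (hcj : IsSliceConj inn J m cj)
    {A As : H →L[ℍᵐᵒᵖ] H} {A₁ A₂ As₁ As₂ : H → H}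
    (hdecA : IsSliceDecomp inn J m n cj A A₁ A₂)
    (hdecAs : IsSliceDecomp inn J m n cj As As₁ As₂) :
    A.comp As = As.comp A ↔
    ∀ x ∈ Hplus J m,
      (A₁ (As₁ x) - A₂ (cj (As₂ (cj x))) = As₁ (A₁ x) - As₂ (cj (A₂ (cj x))) ∧
       A₂ (cj (As₁ x)) + A₁ (As₂ (cj x)) = As₂ (cj (A₁ x)) + As₁ (A₂ (cj x))) := by
  constructor
  · intro h x hx
    have hcx : cj x ∈ Hplus J m := hcj.mem _ hx
    have e : A (As x) = As (A x) := by
      rw [← ContinuousLinearMap.comp_apply, ← ContinuousLinearMap.comp_apply, h]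
    rw [comp_decomp hslice hcj hdecA hdecAs hx,
      comp_decomp hslice hcj hdecAs hdecA hx] at e
    exact vuniq hslice
      (hp_sub (hdecA.mem₁ _ (hdecAs.mem₁ _ hx))
        (hdecA.mem₂ _ (hcj.mem _ (hdecAs.mem₂ _ hcx))))
      (hp_add (hdecA.mem₂ _ (hcj.mem _ (hdecAs.mem₁ _ hx)))
        (hdecA.mem₁ _ (hdecAs.mem₂ _ hcx)))
      (hp_sub (hdecAs.mem₁ _ (hdecA.mem₁ _ hx))
        (hdecAs.mem₂ _ (hcj.mem _ (hdecA.mem₂ _ hcx))))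
      (hp_add (hdecAs.mem₂ _ (hcj.mem _ (hdecA.mem₁ _ hx)))
        (hdecAs.mem₁ _ (hdecA.mem₂ _ hcx))) e
  · intro h
    apply ContinuousLinearMap.ext
    apply op_restrict hslice
    intro x hx
    rw [ContinuousLinearMap.comp_apply, ContinuousLinearMap.comp_apply,
      comp_decomp hslice hcj hdecA hdecAs hx,
      comp_decomp hslice hcj hdecAs hdecA hx,
      (h x hx).1, (h x hx).2]

/-- componentwise description of `A ∘ As = 1`. -/
lemma comp_one_iff (hslice : SliceSetup inn J m n) (hcj : IsSliceConj inn J m cj)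
    {A As : H →L[ℍᵐᵒᵖ] H} {A₁ A₂ As₁ As₂ : H → H}
    (hdecA : IsSliceDecomp inn J m n cj A A₁ A₂)
    (hdecAs : IsSliceDecomp inn J m n cj As As₁ As₂) :
    A.comp As = 1 ↔
    ∀ x ∈ Hplus J m,
      (A₁ (As₁ x) - A₂ (cj (As₂ (cj x))) = x ∧
       A₂ (cj (As₁ x)) + A₁ (As₂ (cj x)) = 0) := by
  constructor
  · intro h x hx
    have hcx : cj x ∈ Hplus J m := hcj.mem _ hx
    have e : A (As x) = x := by
      rw [← ContinuousLinearMap.comp_apply, h, ContinuousLinearMap.one_apply]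
    rw [comp_decomp hslice hcj hdecA hdecAs hx] at e
    have e' : (A₁ (As₁ x) - A₂ (cj (As₂ (cj x))))
        + op n • (A₂ (cj (As₁ x)) + A₁ (As₂ (cj x))) = x + op n • 0 := by
      rw [smul_zero, add_zero]; exact e
    exact vuniq hslice
      (hp_sub (hdecA.mem₁ _ (hdecAs.mem₁ _ hx))
        (hdecA.mem₂ _ (hcj.mem _ (hdecAs.mem₂ _ hcx))))
      (hp_add (hdecA.mem₂ _ (hcj.mem _ (hdecAs.mem₁ _ hx)))
        (hdecA.mem₁ _ (hdecAs.mem₂ _ hcx)))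
      hx hp_zero e'
  · intro h
    apply ContinuousLinearMap.ext
    apply op_restrict hslice
    intro x hx
    rw [ContinuousLinearMap.comp_apply,
      comp_decomp hslice hcj hdecA hdecAs hx,
      (h x hx).1, (h x hx).2, smul_zero, add_zero,
      ContinuousLinearMap.one_apply]

/-- componentwise description of `χ_A χ_As = χ_As χ_A` on `H₊ ⊕ H₊`. -/
lemma chi_comm_iff (hslice : SliceSetup inn J m n) (hcj : IsSliceConj inn J m cj)
    {A As : H →L[ℍᵐᵒᵖ] H} {A₁ A₂ As₁ As₂ : H → H}
    (hdecA : IsSliceDecomp inn J m n cj A A₁ A₂)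
    (hdecAs : IsSliceDecomp inn J m n cj As As₁ As₂) :
    (∀ p ∈ Hplus2 J m, chi cj A₁ A₂ (chi cj As₁ As₂ p) = chi cj As₁ As₂ (chi cj A₁ A₂ p))
    ↔ ∀ x ∈ Hplus J m,
      (A₁ (As₁ x) - A₂ (cj (As₂ (cj x))) = As₁ (A₁ x) - As₂ (cj (A₂ (cj x))) ∧
       A₂ (cj (As₁ x)) + A₁ (As₂ (cj x)) = As₂ (cj (A₁ x)) + As₁ (A₂ (cj x))) := by
  have hcjneg : ∀ z : H, cj (-z) = -(cj z) := af_neg hcj.add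
  have hA₁neg : ∀ z : H, A₁ (-z) = -(A₁ z) := af_neg hdecA.add₁
  have hA₂neg : ∀ z : H, A₂ (-z) = -(A₂ z) := af_neg hdecA.add₂
  have hAs₁neg : ∀ z : H, As₁ (-z) = -(As₁ z) := af_neg hdecAs.add₁
  have hAs₂neg : ∀ z : H, As₂ (-z) = -(As₂ z) := af_neg hdecAs.add₂
  have hcj0 : cj 0 = 0 := af_zero hcj.add
  have hA₁0 : A₁ 0 = 0 := af_zero hdecA.add₁
  have hA₂0 : A₂ 0 = 0 := af_zero hdecA.add₂
  have hAs₁0 : As₁ 0 = 0 := af_zero hdecAs.add₁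
  have hAs₂0 : As₂ 0 = 0 := af_zero hdecAs.add₂
  constructor
  · intro h x hx
    have e := h (x, 0) ⟨hx, hp_zero⟩
    simp only [chi, hcj0, hA₁0, hA₂0, hAs₁0, hAs₂0, add_zero, neg_zero, zero_add,
      hcjneg, hA₁neg, hA₂neg, hAs₁neg, hAs₂neg, hcj.invol, Prod.mk.injEq] at e
    obtain ⟨e1, e2⟩ := e
    constructor
    · rw [sub_eq_add_neg, sub_eq_add_neg]
      exact e1
    · rw [← neg_add, ← neg_add] at e2
      have e3 := neg_injective e2
      rw [← hcj.add, ← hcj.add] at e3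
      have e4 := congrArg cj e3
      rwa [hcj.invol, hcj.invol] at e4
  · rintro h ⟨p₁, p₂⟩ ⟨hp₁, hp₂⟩
    have hcp₂ : cj p₂ ∈ Hplus J m := hcj.mem _ hp₂
    have h1 := (h p₁ hp₁).1
    have h2 := (h p₁ hp₁).2
    have h3 := (h (cj p₂) hcp₂).1
    have h4 := (h (cj p₂) hcp₂).2
    rw [hcj.invol] at h3 h4
    simp only [chi, hdecA.add₁, hdecA.add₂, hdecAs.add₁, hdecAs.add₂, hcj.add,
      hcjneg, hA₁neg, hA₂neg, hAs₁neg, hAs₂neg, hcj.invol, Prod.mk.injEq]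
    constructor
    · -- first components
      have e1 : A₁ (As₁ p₁) = As₁ (A₁ p₁) - As₂ (cj (A₂ (cj p₁)))
          + A₂ (cj (As₂ (cj p₁))) := by rw [← h1]; abel
      have e2 : A₁ (As₂ p₂) = As₂ (cj (A₁ (cj p₂))) + As₁ (A₂ p₂)
          - A₂ (cj (As₁ (cj p₂))) := by rw [← h4]; abel
      rw [e1, e2]; abel
    · -- second components
      have g1 : cj (A₂ (cj (As₁ p₁))) + cj (A₁ (As₂ (cj p₁)))
          = cj (As₂ (cj (A₁ p₁))) + cj (As₁ (A₂ (cj p₁))) := by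
        have := congrArg cj h2
        rwa [hcj.add, hcj.add] at this
      have g2 : cj (A₁ (As₁ (cj p₂))) - cj (A₂ (cj (As₂ p₂)))
          = cj (As₁ (A₁ (cj p₂))) - cj (As₂ (cj (A₂ p₂))) := by
        have := congrArg cj h3
        rwa [af_sub hcj.add, af_sub hcj.add] at this
      have e1 : cj (A₂ (cj (As₁ p₁))) = cj (As₂ (cj (A₁ p₁)))
          + cj (As₁ (A₂ (cj p₁))) - cj (A₁ (As₂ (cj p₁))) := by rw [← g1]; abel
      have e2 : cj (A₁ (As₁ (cj p₂))) = cj (As₁ (A₁ (cj p₂)))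
          - cj (As₂ (cj (A₂ p₂))) + cj (A₂ (cj (As₂ p₂))) := by rw [← g2]; abel
      rw [e1, e2]; abel

/-- componentwise description of `χ_A χ_As = id` on `H₊ ⊕ H₊`. -/
lemma chi_id_iff (hslice : SliceSetup inn J m n) (hcj : IsSliceConj inn J m cj)
    {A As : H →L[ℍᵐᵒᵖ] H} {A₁ A₂ As₁ As₂ : H → H}
    (hdecA : IsSliceDecomp inn J m n cj A A₁ A₂)
    (hdecAs : IsSliceDecomp inn J m n cj As As₁ As₂) :
    (∀ p ∈ Hplus2 J m, chi cj A₁ A₂ (chi cj As₁ As₂ p) = p)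
    ↔ ∀ x ∈ Hplus J m,
      (A₁ (As₁ x) - A₂ (cj (As₂ (cj x))) = x ∧
       A₂ (cj (As₁ x)) + A₁ (As₂ (cj x)) = 0) := by
  have hcjneg : ∀ z : H, cj (-z) = -(cj z) := af_neg hcj.add
  have hA₁neg : ∀ z : H, A₁ (-z) = -(A₁ z) := af_neg hdecA.add₁
  have hA₂neg : ∀ z : H, A₂ (-z) = -(A₂ z) := af_neg hdecA.add₂
  have hAs₁neg : ∀ z : H, As₁ (-z) = -(As₁ z) := af_neg hdecAs.add₁
  have hAs₂neg : ∀ z : H, As₂ (-z) = -(As₂ z) := af_neg hdecAs.add₂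
  have hcj0 : cj 0 = 0 := af_zero hcj.add
  have hA₁0 : A₁ 0 = 0 := af_zero hdecA.add₁
  have hA₂0 : A₂ 0 = 0 := af_zero hdecA.add₂
  have hAs₁0 : As₁ 0 = 0 := af_zero hdecAs.add₁
  have hAs₂0 : As₂ 0 = 0 := af_zero hdecAs.add₂
  constructor
  · intro h x hx
    have e := h (x, 0) ⟨hx, hp_zero⟩
    simp only [chi, hcj0, hA₁0, hA₂0, hAs₁0, hAs₂0, add_zero, neg_zero, zero_add,
      hcjneg, hA₁neg, hA₂neg, hAs₁neg, hAs₂neg, hcj.invol, Prod.mk.injEq] at e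
    obtain ⟨e1, e2⟩ := e
    constructor
    · rw [sub_eq_add_neg]
      exact e1
    · rw [← neg_add, neg_eq_zero, ← hcj.add] at e2
      have e4 := congrArg cj e2
      rwa [hcj.invol, hcj0] at e4
  · rintro h ⟨p₁, p₂⟩ ⟨hp₁, hp₂⟩
    have hcp₂ : cj p₂ ∈ Hplus J m := hcj.mem _ hp₂
    have h1 := (h p₁ hp₁).1
    have h2 := (h p₁ hp₁).2
    have h3 := (h (cj p₂) hcp₂).1
    have h4 := (h (cj p₂) hcp₂).2
    rw [hcj.invol] at h3 h4
    simp only [chi, hdecA.add₁, hdecA.add₂, hdecAs.add₁, hdecAs.add₂, hcj.add,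
      hcjneg, hA₁neg, hA₂neg, hAs₁neg, hAs₂neg, hcj.invol, Prod.mk.injEq]
    constructor
    · have e1 : A₁ (As₁ p₁) = p₁ + A₂ (cj (As₂ (cj p₁))) :=
        sub_eq_iff_eq_add.mp h1
      have e2 : A₁ (As₂ p₂) = -(A₂ (cj (As₁ (cj p₂)))) := by
        have : A₂ (cj (As₁ (cj p₂))) + A₁ (As₂ p₂) = 0 := h4
        exact eq_neg_of_add_eq_zero_right this
      rw [e1, e2]; abel
    · have g1 : cj (A₂ (cj (As₁ p₁))) + cj (A₁ (As₂ (cj p₁))) = 0 := by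
        have := congrArg cj h2
        rwa [hcj.add, hcj0] at this
      have g2 : cj (A₁ (As₁ (cj p₂))) - cj (A₂ (cj (As₂ p₂))) = p₂ := by
        have := congrArg cj h3
        rwa [af_sub hcj.add, hcj.invol] at this
      have e1 : cj (A₂ (cj (As₁ p₁))) = -(cj (A₁ (As₂ (cj p₁)))) :=
        eq_neg_of_add_eq_zero_left g1
      have e2 : cj (A₁ (As₁ (cj p₂))) = p₂ + cj (A₂ (cj (As₂ p₂))) :=
        sub_eq_iff_eq_add.mp g2
      rw [e1, e2]; abel

end Aux5

section Aux6
set_option linter.unusedSectionVars false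
set_option linter.unusedVariables false

variable {inn : H → H → ℍ} {J : H →L[ℍᵐᵒᵖ] H} {m n : ℍ} {cj : H → H}

lemma expandL (hinn : QInner inn) (hslice : SliceSetup inn J m n)
    (hcj : IsSliceConj inn J m cj)
    {A : H →L[ℍᵐᵒᵖ] H} {A₁ A₂ : H → H}
    (hdecA : IsSliceDecomp inn J m n cj A A₁ A₂)
    {x y : H} (hx : x ∈ Hplus J m) (hy : y ∈ Hplus J m) :
    inn (A x) y = inn (A₁ x) y + (-(star (inn (A₂ (cj x)) y))) * n := by
  rw [hdecA.decomp x hx]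
  have hp := pair hinn hslice (hdecA.mem₁ x hx) (hdecA.mem₂ _ (hcj.mem x hx))
    hy (hp_zero (J := J) (m := m))
  rw [smul_zero, add_zero] at hp
  rw [hp]
  simp only [inn_zero_right hinn, star_zero, add_zero, zero_sub, neg_mul]

lemma expandR (hinn : QInner inn) (hslice : SliceSetup inn J m n)
    (hcj : IsSliceConj inn J m cj)
    {A : H →L[ℍᵐᵒᵖ] H} {A₁ A₂ : H → H}
    (hdecA : IsSliceDecomp inn J m n cj A A₁ A₂)
    {x y : H} (hx : x ∈ Hplus J m) (hy : y ∈ Hplus J m) :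
    inn x (A y) = inn x (A₁ y) + inn x (A₂ (cj y)) * n := by
  rw [hdecA.decomp y hy]
  have hp := pair hinn hslice hx (hp_zero (J := J) (m := m))
    (hdecA.mem₁ y hy) (hdecA.mem₂ _ (hcj.mem y hy))
  rw [smul_zero, add_zero] at hp
  rw [hp]
  simp only [inn_zero_left hinn, star_zero, add_zero, sub_zero]

lemma chi_extract (hinn : QInner inn) (hcj : IsSliceConj inn J m cj)
    {A₁ A₂ : H → H}
    (hadd₁ : ∀ x y : H, A₁ (x+y) = A₁ x + A₁ y)
    (hadd₂ : ∀ x y : H, A₂ (x+y) = A₂ x + A₂ y)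
    (s : ℝ)
    (hchi : ∀ p ∈ Hplus2 J m, ∀ q ∈ Hplus2 J m,
      innP inn (chi cj A₁ A₂ p) q = (s:ℍ) * innP inn p (chi cj A₁ A₂ q)) :
    (∀ x ∈ Hplus J m, ∀ y ∈ Hplus J m, inn (A₁ x) y = (s:ℍ) * inn x (A₁ y)) ∧
    (∀ x ∈ Hplus J m, ∀ y ∈ Hplus J m,
      inn (cj (A₂ (cj x))) y = -((s:ℍ) * inn x (A₂ y))) := by
  have hcj0 : cj 0 = 0 := af_zero hcj.add
  have hA₁0 : A₁ 0 = 0 := af_zero hadd₁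
  have hA₂0 : A₂ 0 = 0 := af_zero hadd₂
  constructor
  · intro x hx y hy
    have e := hchi (x, 0) ⟨hx, hp_zero⟩ (y, 0) ⟨hy, hp_zero⟩
    simp only [innP, chi, hcj0, hA₁0, hA₂0, add_zero, zero_add, neg_zero,
      inn_zero_right hinn, inn_zero_left hinn] at e
    exact e
  · intro x hx y hy
    have e := hchi (x, 0) ⟨hx, hp_zero⟩ (0, y) ⟨hp_zero, hy⟩
    simp only [innP, chi, hcj0, hA₁0, hA₂0, add_zero, zero_add, neg_zero,
      inn_zero_right hinn, inn_zero_left hinn, inn_neg_left hinn] at e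
    have := congrArg Neg.neg e
    simpa using this

lemma adj_back (hinn : QInner inn) (hslice : SliceSetup inn J m n)
    (hcj : IsSliceConj inn J m cj)
    {A : H →L[ℍᵐᵒᵖ] H} {A₁ A₂ : H → H}
    (hdecA : IsSliceDecomp inn J m n cj A A₁ A₂)
    (s : ℝ)
    (c1 : ∀ x ∈ Hplus J m, ∀ y ∈ Hplus J m, inn (A₁ x) y = (s:ℍ) * inn x (A₁ y))
    (c2 : ∀ x ∈ Hplus J m, ∀ y ∈ Hplus J m,
      inn (cj (A₂ (cj x))) y = -((s:ℍ) * inn x (A₂ y))) :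
    ∀ x y : H, inn (A x) y = (s:ℍ) * inn x (A y) := by
  apply restrict hinn hslice s
  intro x hx y hy
  have hcy : cj y ∈ Hplus J m := hcj.mem _ hy
  rw [expandL hinn hslice hcj hdecA hx hy, expandR hinn hslice hcj hdecA hx hy,
    mul_add]
  congr 1
  · exact c1 x hx y hy
  · have e1 : star (inn (A₂ (cj x)) y) = inn (cj (A₂ (cj x))) (cj y) := by
      rw [← hinn.conj_symm]
      exact (hcj.inner _ (hdecA.mem₂ _ (hcj.mem _ hx)) _ hy).symm
    have e2 : inn (cj (A₂ (cj x))) (cj y) = -((s:ℍ) * inn x (A₂ (cj y))) :=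
      c2 x hx (cj y) hcy
    rw [e1, e2, neg_neg, mul_assoc]

end Aux6
/-- `χ_{A*} = (χ_A)*` with respect to the `ℂ_m`-inner product `innP` on
`H₊ ⊕ H₊`; consequently `A` is self-adjoint (resp. positive, normal, unitary, anti
self-adjoint) if and only if `χ_A` is. Here `As = A*`. -/
theorem chi_adjoint_and_equivalences
    [CompleteSpace H] (inn : H → H → ℍ) (hinn : QInner inn)
    (J : H →L[ℍᵐᵒᵖ] H) (m n : ℍ) (hslice : SliceSetup inn J m n)
    (cj : H → H) (hcj : IsSliceConj inn J m cj)
    (A As : H →L[ℍᵐᵒᵖ] H) (A₁ A₂ As₁ As₂ : H → H)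
    (hadj : IsAdjB inn A As)
    (hdecA : IsSliceDecomp inn J m n cj A A₁ A₂)
    (hdecAs : IsSliceDecomp inn J m n cj As As₁ As₂) :
    -- `χ_{A*} = (χ_A)*`
    (∀ p ∈ Hplus2 J m, ∀ q ∈ Hplus2 J m,
      innP inn (chi cj As₁ As₂ p) q = innP inn p (chi cj A₁ A₂ q)) ∧
    -- self-adjoint
    ((∀ x y : H, inn (A x) y = inn x (A y)) ↔
      ∀ p ∈ Hplus2 J m, ∀ q ∈ Hplus2 J m,
        innP inn (chi cj A₁ A₂ p) q = innP inn p (chi cj A₁ A₂ q)) ∧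
    -- positive
    (IsPosB inn A ↔
      ((∀ p ∈ Hplus2 J m, ∀ q ∈ Hplus2 J m,
          innP inn (chi cj A₁ A₂ p) q = innP inn p (chi cj A₁ A₂ q)) ∧
        ∀ p ∈ Hplus2 J m, ∃ r : ℝ, 0 ≤ r ∧ innP inn p (chi cj A₁ A₂ p) = (r : ℍ))) ∧
    -- normal
    (A.comp As = As.comp A ↔
      ∀ p ∈ Hplus2 J m,
        chi cj A₁ A₂ (chi cj As₁ As₂ p) = chi cj As₁ As₂ (chi cj A₁ A₂ p)) ∧
    -- unitary
    ((A.comp As = 1 ∧ As.comp A = 1) ↔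
      ∀ p ∈ Hplus2 J m,
        chi cj A₁ A₂ (chi cj As₁ As₂ p) = p ∧ chi cj As₁ As₂ (chi cj A₁ A₂ p) = p) ∧
    -- anti self-adjoint
    ((∀ x y : H, inn (A x) y = -(inn x (A y))) ↔
      ∀ p ∈ Hplus2 J m, ∀ q ∈ Hplus2 J m,
        innP inn (chi cj A₁ A₂ p) q = -(innP inn p (chi cj A₁ A₂ q))) := by
  have hcjneg : ∀ z : H, cj (-z) = -(cj z) := af_neg hcj.add
  have hone : ((1:ℝ):ℍ) = 1 := by norm_cast
  have hnegone : (((-1):ℝ):ℍ) = -1 := by norm_cast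
  have part1 := chi_adj hinn hslice hcj hadj hdecA hdecAs
  have SA : (∀ x y : H, inn (A x) y = inn x (A y)) ↔
      ∀ p ∈ Hplus2 J m, ∀ q ∈ Hplus2 J m,
        innP inn (chi cj A₁ A₂ p) q = innP inn p (chi cj A₁ A₂ q) := by
    constructor
    · intro hA
      exact chi_adj hinn hslice hcj hA hdecA hdecA
    · intro hchi
      have hchi' : ∀ p ∈ Hplus2 J m, ∀ q ∈ Hplus2 J m,
          innP inn (chi cj A₁ A₂ p) q = ((1:ℝ):ℍ) * innP inn p (chi cj A₁ A₂ q) := by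
        intro p hp q hq
        rw [hone, one_mul]
        exact hchi p hp q hq
      obtain ⟨c1, c2⟩ := chi_extract hinn hcj hdecA.add₁ hdecA.add₂ 1 hchi'
      intro x y
      have h := adj_back hinn hslice hcj hdecA 1 c1 c2 x y
      rwa [hone, one_mul] at h
  refine ⟨part1, SA, ?_, ?_, ?_, ?_⟩
  · -- positive
    constructor
    · rintro ⟨h1, h2⟩
      refine ⟨SA.mp h1, ?_⟩
      rintro ⟨p₁, p₂⟩ ⟨hp₁, hp₂⟩
      obtain ⟨r, hr0, hr⟩ := h2 (p₁ + op n • (-(cj p₂)))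
      refine ⟨r, hr0, ?_⟩
      rw [← quad hinn hslice hcj hdecA h1 hp₁ hp₂]
      exact hr
    · rintro ⟨hχadj, hχpos⟩
      have h1 : ∀ x y : H, inn (A x) y = inn x (A y) := SA.mpr hχadj
      refine ⟨h1, ?_⟩
      intro x
      obtain ⟨x₁, hx₁, x₂, hx₂, rfl⟩ := hslice.split x
      have hmem : -(cj x₂) ∈ Hplus J m := hp_neg (hcj.mem _ hx₂)
      obtain ⟨r, hr0, hr⟩ := hχpos (x₁, -(cj x₂)) ⟨hx₁, hmem⟩
      refine ⟨r, hr0, ?_⟩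
      have hq := quad hinn hslice hcj hdecA h1 hx₁ hmem
      have hrw : -(cj (-(cj x₂))) = x₂ := by rw [hcjneg, hcj.invol, neg_neg]
      rw [hrw] at hq
      rw [hq]; exact hr
  · -- normal
    exact (comp_comm_iff hslice hcj hdecA hdecAs).trans
      (chi_comm_iff hslice hcj hdecA hdecAs).symm
  · -- unitary
    rw [comp_one_iff hslice hcj hdecA hdecAs, comp_one_iff hslice hcj hdecAs hdecA]
    constructor
    · rintro ⟨u1, u2⟩ p hp
      exact ⟨(chi_id_iff hslice hcj hdecA hdecAs).mpr u1 p hp,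
        (chi_id_iff hslice hcj hdecAs hdecA).mpr u2 p hp⟩
    · intro h
      exact ⟨(chi_id_iff hslice hcj hdecA hdecAs).mp (fun p hp => (h p hp).1),
        (chi_id_iff hslice hcj hdecAs hdecA).mp (fun p hp => (h p hp).2)⟩
  · -- anti self-adjoint
    constructor
    · intro hA
      have hdecNeg : IsSliceDecomp inn J m n cj (-A)
          (fun z => -(A₁ z)) (fun z => -(A₂ z)) := by
        refine ⟨?_, ?_, ?_, ?_, ?_, ?_, ?_⟩
        · exact fun x hx => hp_neg (hdecA.mem₁ x hx)
        · exact fun x hx => hp_neg (hdecA.mem₂ x hx)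
        · intro x y; simp only [hdecA.add₁]; abel
        · intro x y; simp only [hdecA.add₂]; abel
        · intro x; simp only [hdecA.lin₁, smul_neg]
        · intro x; simp only [hdecA.lin₂, smul_neg]
        · intro x hx
          rw [ContinuousLinearMap.neg_apply, hdecA.decomp x hx, neg_add, smul_neg]
      have hadjNeg : IsAdjB inn A (-A) := by
        intro x y
        rw [ContinuousLinearMap.neg_apply, inn_neg_left hinn, hA x y, neg_neg]
      have e := chi_adj hinn hslice hcj hadjNeg hdecA hdecNeg
      intro p hp q hq
      have e1 := e p hp q hq
      rw [← e1]
      simp only [innP, chi, hcjneg, inn_add_left hinn, inn_neg_left hinn,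
        neg_neg, neg_add]
    · intro hchi
      have hchi' : ∀ p ∈ Hplus2 J m, ∀ q ∈ Hplus2 J m,
          innP inn (chi cj A₁ A₂ p) q = (((-1):ℝ):ℍ) * innP inn p (chi cj A₁ A₂ q) := by
        intro p hp q hq
        rw [hnegone, neg_one_mul]
        exact hchi p hp q hq
      obtain ⟨c1, c2⟩ := chi_extract hinn hcj hdecA.add₁ hdecA.add₂ (-1) hchi'
      intro x y
      have h := adj_back hinn hslice hcj hdecA (-1) c1 c2 x y
      rwa [hnegone, neg_one_mul] at h
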